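/- Let n > m, let v ∈ ℝⁿ contain both a positive and a negative entry, and let w ∈ ℝᵐ be arbitrary. Then there exists a nonnegative m×n matrix B of full row rank such that Bv = w. -/

import Mathlib

theorem stmt2 (m n : ℕ) (hmn : m < n) (v : Fin n → ℝ) (w : Fin m → ℝ)
    (hpos : ∃ i, 0 < v i) (hneg : ∃ i, v i < 0) :
    ∃ B : Matrix (Fin m) (Fin n) ℝ,
      (∀ i j, 0 ≤ B i j) ∧ B.rank = m ∧ B.mulVec v = w := by
  classical
  obtain ⟨p, hp⟩ := hpos
  obtain ⟨q, hq⟩ := hneg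
  -- injection f : Fin m → Fin n avoiding p
  have hf1 : ∀ i : Fin m, (i : ℕ) < n := fun i => lt_trans i.2 hmn
  have hf2 : ∀ i : Fin m, (i : ℕ) + 1 < n := fun i => by have := i.2; omega
  set f : Fin m → Fin n := fun i =>
    if (i : ℕ) < (p : ℕ) then ⟨i, hf1 i⟩ else ⟨(i : ℕ) + 1, hf2 i⟩ with hf
  have hfne : ∀ i, f i ≠ p := by
    intro i
    simp only [hf]
    split <;> (intro h; apply_fun (Fin.val) at h; simp at h; omega)
  have hfinj : Function.Injective f := by
    intro i j h
    simp only [hf] at h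
    split at h <;> split at h <;>
      (apply_fun (Fin.val) at h; simp at h; exact Fin.ext (by omega))
  set s : Fin m → ℝ := fun i => w i - v (f i) with hs
  set a : Fin m → ℝ := fun i => if 0 ≤ s i then s i / v p else 0 with ha
  set b : Fin m → ℝ := fun i => if 0 ≤ s i then 0 else s i / v q with hb
  have hanneg : ∀ i, 0 ≤ a i := by
    intro i; simp only [ha]; split
    · exact div_nonneg (by assumption) hp.le
    · exact le_refl 0
  have hbnneg : ∀ i, 0 ≤ b i := by
    intro i; simp only [hb]; split
    · exact le_refl 0
    · exact le_of_lt (div_pos_of_neg_of_neg (by linarith) hq)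
  set B : Matrix (Fin m) (Fin n) ℝ := fun i j =>
    (if j = f i then 1 else 0) + a i * (if j = p then 1 else 0)
      + b i * (if j = q then 1 else 0) with hB
  refine ⟨B, ?_, ?_, ?_⟩
  · intro i j
    simp only [hB]
    have : (0:ℝ) ≤ (if j = f i then (1:ℝ) else 0) := by positivity
    have h2 : (0:ℝ) ≤ a i * (if j = p then (1:ℝ) else 0) :=
      mul_nonneg (hanneg i) (by positivity)
    have h3 : (0:ℝ) ≤ b i * (if j = q then (1:ℝ) else 0) :=
      mul_nonneg (hbnneg i) (by positivity)
    linarith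
  · -- rank
    have hli : LinearIndependent ℝ B := by
      rw [Fintype.linearIndependent_iff]
      intro c hc
      -- evaluate the sum at column f j
      have key : ∀ j : Fin m, c j + ∑ i, (if f j = q then c i * b i else 0) = 0 := by
        intro j
        have := congrFun hc (f j)
        simp only [Finset.sum_apply, Pi.smul_apply, smul_eq_mul, Pi.zero_apply, hB] at this
        have heq : ∀ i : Fin m,
            c i * ((if f j = f i then (1:ℝ) else 0) + a i * (if f j = p then 1 else 0)
              + b i * (if f j = q then 1 else 0))
            = (if f j = f i then c i else 0) + (if f j = q then c i * b i else 0) := by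
          intro i
          rw [if_neg (hfne j)]
          split <;> split <;> ring
        rw [Finset.sum_congr rfl (fun i _ => heq i)] at this
        rw [Finset.sum_add_distrib] at this
        have h1 : ∑ i, (if f j = f i then c i else 0) = c j := by
          have : ∀ i : Fin m, (if f j = f i then c i else 0) = (if j = i then c i else 0) := by
            intro i
            congr 1
            simp only [eq_iff_iff]
            exact ⟨fun h => hfinj h, fun h => by rw [h]⟩
          rw [Finset.sum_congr rfl (fun i _ => this i), Finset.sum_ite_eq]
          simp
        rw [h1] at this
        exact this
      -- first, c i = 0 whenever f i ≠ q
      have h0 : ∀ j : Fin m, f j ≠ q → c j = 0 := by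
        intro j hj
        have := key j
        simp only [if_neg hj, Finset.sum_const_zero] at this
        linarith
      intro j
      by_cases hjq : f j = q
      · have := key j
        simp only [hjq, eq_self_iff_true, if_true] at this
        have hsum : ∑ i, c i * b i = c j * b j := by
          rw [Finset.sum_eq_single j]
          · intro i _ hij
            have : f i ≠ q := fun h => hij (hfinj (h.trans hjq.symm))
            rw [h0 i this]; ring
          · intro h; exact absurd (Finset.mem_univ j) h
        rw [hsum] at this
        have : c j * (1 + b j) = 0 := by linarith
        have hb1 : (0:ℝ) < 1 + b j := by have := hbnneg j; linarith
        rcases mul_eq_zero.mp this with h | h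
        · exact h
        · linarith
      · exact h0 j hjq
    have := hli.rank_matrix
    rw [Fintype.card_fin] at this; exact this
  · -- mulVec
    funext i
    simp only [Matrix.mulVec, dotProduct, hB]
    have expand : ∀ j : Fin n,
        ((if j = f i then (1:ℝ) else 0) + a i * (if j = p then 1 else 0)
          + b i * (if j = q then 1 else 0)) * v j
        = (if j = f i then v j else 0) + (if j = p then a i * v j else 0)
          + (if j = q then b i * v j else 0) := by
      intro j; split <;> split <;> split <;> ring
    rw [Finset.sum_congr rfl (fun j _ => expand j)]
    rw [Finset.sum_add_distrib, Finset.sum_add_distrib]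
    rw [Finset.sum_ite_eq' Finset.univ (f i), Finset.sum_ite_eq' Finset.univ p,
      Finset.sum_ite_eq' Finset.univ q]
    simp only [Finset.mem_univ, if_true]
    have : a i * v p + b i * v q = s i := by
      simp only [ha, hb]
      split
      · rw [zero_mul, add_zero, div_mul_cancel₀ _ (ne_of_gt hp)]
      · rw [zero_mul, zero_add, div_mul_cancel₀ _ (ne_of_lt hq)]
    simp only [hs] at this
    linarith
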